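/- Suppose Σ̂_{xx}^{(m)} are symmetric with κ₁I_p ⪯ Σ̂_{xx}^{(m)} ⪯ κ₂I_p for all m, W is doubly stochastic, and 0 < α < 2/κ₂. Let θ* be the unique fixed point of θ = Δ*(W⊗I_p)θ + αΣ̂*_{xy} and θ̂*_{ols} = 𝟏_M ⊗ θ̂_{ols} with θ̂_{ols} = Σ̂_{xx}^{-1}Σ̂_{xy}, where Σ̂_{xx} = M^{-1}Σ_m Σ̂_{xx}^{(m)} and Σ̂_{xy} = M^{-1}Σ_m Σ̂_{xy}^{(m)}. Then the residual r = (I − Δ*(W⊗I_p))θ̂*_{ols} − αΣ̂*_{xy} satisfies M^{-1/2}‖r‖ ≤ α · {SE(Σ̂_{xx})‖θ̂_{ols}‖ + SE(Σ̂_{xy})}, where SE²(Σ̂_{xx}) = tr[M^{-1}Σ_m(Σ̂^{(m)}_{xx} − Σ̂_{xx})²] and SE²(Σ̂_{xy}) = M^{-1}Σ_m‖Σ̂^{(m)}_{xy} − Σ̂_{xy}‖². -/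

import Mathlib

private lemma minkowski_sq {ι : Type*} [Fintype ι] (f g : ι → ℝ) :
    Real.sqrt (∑ i, (f i + g i) ^ 2)
      ≤ Real.sqrt (∑ i, f i ^ 2) + Real.sqrt (∑ i, g i ^ 2) := by
  have hf : (0:ℝ) ≤ ∑ i, f i ^ 2 := Finset.sum_nonneg fun i _ => sq_nonneg _
  have hg : (0:ℝ) ≤ ∑ i, g i ^ 2 := Finset.sum_nonneg fun i _ => sq_nonneg _
  have h1 : ∑ i, f i * g i ≤ Real.sqrt (∑ i, f i ^ 2) * Real.sqrt (∑ i, g i ^ 2) :=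
    Real.sum_mul_le_sqrt_mul_sqrt _ _ _
  have e1 : Real.sqrt (∑ i, f i ^ 2) ^ 2 = ∑ i, f i ^ 2 := Real.sq_sqrt hf
  have e2 : Real.sqrt (∑ i, g i ^ 2) ^ 2 = ∑ i, g i ^ 2 := Real.sq_sqrt hg
  have expand : ∑ i, (f i + g i) ^ 2
      = ∑ i, f i ^ 2 + 2 * ∑ i, f i * g i + ∑ i, g i ^ 2 := by
    rw [Finset.mul_sum, ← Finset.sum_add_distrib, ← Finset.sum_add_distrib]
    exact Finset.sum_congr rfl fun i _ => by ring
  have h2 : ∑ i, (f i + g i) ^ 2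
      ≤ (Real.sqrt (∑ i, f i ^ 2) + Real.sqrt (∑ i, g i ^ 2)) ^ 2 := by
    rw [expand]; nlinarith [h1, e1, e2]
  calc Real.sqrt (∑ i, (f i + g i) ^ 2)
      ≤ Real.sqrt ((Real.sqrt (∑ i, f i ^ 2) + Real.sqrt (∑ i, g i ^ 2)) ^ 2) :=
        Real.sqrt_le_sqrt h2
    _ = _ := Real.sqrt_sq (by positivity)

theorem stmt18 (M p : ℕ)
    (Sxx : Fin M → Matrix (Fin p) (Fin p) ℝ)
    (hSh : ∀ m, (Sxx m).IsHermitian)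
    (κ₁ κ₂ : ℝ) (hκ₁ : 0 < κ₁) (hκ₁₂ : κ₁ ≤ κ₂)
    (hlow : ∀ m, (Sxx m - κ₁ • (1 : Matrix (Fin p) (Fin p) ℝ)).PosSemidef)
    (hup : ∀ m, (κ₂ • (1 : Matrix (Fin p) (Fin p) ℝ) - Sxx m).PosSemidef)
    (W : Matrix (Fin M) (Fin M) ℝ)
    (hWnn : ∀ i j, 0 ≤ W i j) (hWrow : ∀ i, ∑ j, W i j = 1)
    (hWcol : ∀ j, ∑ i, W i j = 1)
    (α : ℝ) (hα : 0 < α) (hακ : α * κ₂ < 2)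
    (Sxy : Fin M → Fin p → ℝ)
    (Sxxbar : Matrix (Fin p) (Fin p) ℝ) (hSxxbar : Sxxbar = (M : ℝ)⁻¹ • ∑ m, Sxx m)
    (Sxybar : Fin p → ℝ) (hSxybar : Sxybar = (M : ℝ)⁻¹ • ∑ m, Sxy m)
    (θols : Fin p → ℝ) (hθols : θols = Sxxbar⁻¹.mulVec Sxybar)
    (Δstar : Matrix (Fin M × Fin p) (Fin M × Fin p) ℝ)
    (hΔstar : ∀ m i m' i',
      Δstar (m, i) (m', i')
        = if m = m' then ((1 : Matrix (Fin p) (Fin p) ℝ) - α • Sxx m) i i' else 0)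
    (Wk : Matrix (Fin M × Fin p) (Fin M × Fin p) ℝ)
    (hWk : ∀ m i m' i', Wk (m, i) (m', i') = if i = i' then W m m' else 0)
    (θolsstar : Fin M × Fin p → ℝ) (hθolsstar : ∀ m i, θolsstar (m, i) = θols i)
    (Sxystar : Fin M × Fin p → ℝ) (hSxystar : ∀ m i, Sxystar (m, i) = Sxy m i)
    (r : Fin M × Fin p → ℝ)
    (hr : r = ((1 : Matrix (Fin M × Fin p) (Fin M × Fin p) ℝ) - Δstar * Wk).mulVec θolsstar
              - α • Sxystar) :
    Real.sqrt ((M : ℝ)⁻¹ * ∑ mi, (r mi) ^ 2)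
      ≤ α * (Real.sqrt ((M : ℝ)⁻¹ *
              ∑ m, Matrix.trace ((Sxx m - Sxxbar) * (Sxx m - Sxxbar)))
              * Real.sqrt (∑ i, (θols i) ^ 2)
            + Real.sqrt ((M : ℝ)⁻¹ * ∑ m, ∑ i, (Sxy m i - Sxybar i) ^ 2)) := by
  rcases Nat.eq_zero_or_pos M with hM | hM
  · subst hM
    have : Real.sqrt (((0:ℕ) : ℝ)⁻¹ * ∑ mi : Fin 0 × Fin p, (r mi) ^ 2) = 0 := by
      simp
    rw [this]
    positivity
  have hM0 : (0:ℝ) < (M:ℝ) := by exact_mod_cast hM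
  -- Sxxbar is invertible and Sxxbar * θols = Sxybar
  have hdecomp : (∑ m, Sxx m) = (∑ m, (Sxx m - κ₁ • (1 : Matrix (Fin p) (Fin p) ℝ)))
      + ((M : ℝ) * κ₁) • (1 : Matrix (Fin p) (Fin p) ℝ) := by
    rw [Finset.sum_sub_distrib, Finset.sum_const, Finset.card_univ, Fintype.card_fin,
      mul_smul, Nat.cast_smul_eq_nsmul]
    abel
  have hpd1 : (((M : ℝ) * κ₁) • (1 : Matrix (Fin p) (Fin p) ℝ)).PosDef := by
    rw [Matrix.smul_one_eq_diagonal]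
    exact .diagonal fun _ => by positivity
  have hpsd : (∑ m, (Sxx m - κ₁ • (1 : Matrix (Fin p) (Fin p) ℝ))).PosSemidef :=
    Finset.sum_induction _ _ (fun _ _ ha hb => ha.add hb) Matrix.PosSemidef.zero
      (fun m _ => hlow m)
  have hpd : (∑ m, Sxx m).PosDef := hdecomp ▸ Matrix.PosDef.posSemidef_add hpsd hpd1
  have hdet : IsUnit Sxxbar.det := by
    rw [hSxxbar, Matrix.det_smul]
    exact (mul_pos (pow_pos (inv_pos.mpr hM0) _) hpd.det_pos).ne'.isUnit
  have h_eq : Sxxbar.mulVec θols = Sxybar := by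
    rw [hθols, Matrix.mulVec_mulVec, Matrix.mul_nonsing_inv _ hdet, Matrix.one_mulVec]
  -- the value of r
  have hmv : ∀ m i, ((Δstar * Wk).mulVec θolsstar) (m, i)
      = (((1 : Matrix (Fin p) (Fin p) ℝ) - α • Sxx m).mulVec θols) i := by
    intro m i
    simp only [Matrix.mulVec, Matrix.mul_apply, dotProduct, Fintype.sum_prod_type,
      hΔstar, hWk, hθolsstar, ite_mul, zero_mul, mul_ite, mul_zero,
      Finset.sum_ite_eq, Finset.sum_ite_eq', Finset.mem_univ, if_true]
    rw [Finset.sum_comm]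
    refine Finset.sum_congr rfl fun i' _ => ?_
    calc ∑ m', ((1 : Matrix (Fin p) (Fin p) ℝ) - α • Sxx m) i i' * W m m' * θols i'
        = (((1 : Matrix (Fin p) (Fin p) ℝ) - α • Sxx m) i i' * θols i') * ∑ m', W m m' := by
          rw [Finset.mul_sum]; exact Finset.sum_congr rfl fun m' _ => by ring
      _ = _ := by rw [hWrow, mul_one]
  have hrval : ∀ m i, r (m, i)
      = α * (((Sxx m - Sxxbar).mulVec θols) i - (Sxy m i - Sxybar i)) := by
    intro m i
    have h2 : ((Sxx m - Sxxbar).mulVec θols) i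
        = ((Sxx m).mulVec θols) i - Sxybar i := by
      rw [Matrix.sub_mulVec]
      simp [h_eq]
    rw [hr]
    simp only [Pi.sub_apply, Pi.smul_apply, smul_eq_mul, Matrix.sub_mulVec,
      Matrix.one_mulVec, hmv, hθolsstar, hSxystar, h2]
    rw [Matrix.smul_mulVec]
    simp only [Pi.smul_apply, smul_eq_mul]
    ring
  -- notation
  set D : Fin M → Matrix (Fin p) (Fin p) ℝ := fun m => Sxx m - Sxxbar with hD
  have hsym : ∀ m i j, D m j i = D m i j := by
    intro m i j
    have h1 : Sxx m j i = Sxx m i j := by simpa using (hSh m).apply i j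
    have h2 : ∀ k, Sxx k j i = Sxx k i j := fun k => by simpa using (hSh k).apply i j
    simp only [hD, hSxxbar, Matrix.sub_apply, Matrix.smul_apply, Matrix.sum_apply,
      smul_eq_mul, h1]
    rw [Finset.sum_congr rfl fun k _ => h2 k]
  have htr : ∀ m, Matrix.trace (D m * D m) = ∑ i, ∑ j, (D m i j) ^ 2 := by
    intro m
    simp only [Matrix.trace, Matrix.diag, Matrix.mul_apply]
    exact Finset.sum_congr rfl fun i _ => Finset.sum_congr rfl fun j _ => by
      rw [hsym m j i]; ring
  have htrnn : (0:ℝ) ≤ ∑ m, Matrix.trace (D m * D m) := by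
    rw [Finset.sum_congr rfl fun m _ => htr m]
    positivity
  set B : ℝ := ∑ i, (θols i) ^ 2 with hB
  have hBnn : (0:ℝ) ≤ B := by positivity
  -- Cauchy-Schwarz bound on ∑ u²
  have hU : ∑ m, ∑ i, (((D m).mulVec θols) i) ^ 2 ≤ (∑ m, Matrix.trace (D m * D m)) * B := by
    rw [Finset.sum_mul]
    refine Finset.sum_le_sum fun m _ => ?_
    rw [htr m, Finset.sum_mul]
    refine Finset.sum_le_sum fun i _ => ?_
    simpa [Matrix.mulVec, dotProduct] using
      Finset.sum_mul_sq_le_sq_mul_sq Finset.univ (fun j => D m i j) θols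
  have hUnn : (0:ℝ) ≤ ∑ m, ∑ i, (((D m).mulVec θols) i) ^ 2 := by positivity
  -- Minkowski
  have hmink : Real.sqrt (∑ m, ∑ i, (((D m).mulVec θols) i - (Sxy m i - Sxybar i)) ^ 2)
      ≤ Real.sqrt (∑ m, ∑ i, (((D m).mulVec θols) i) ^ 2)
        + Real.sqrt (∑ m, ∑ i, (Sxy m i - Sxybar i) ^ 2) := by
    have h := minkowski_sq (ι := Fin M × Fin p)
      (fun mi => ((D mi.1).mulVec θols) mi.2) (fun mi => -(Sxy mi.1 mi.2 - Sxybar mi.2))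
    have eA : ∑ mi : Fin M × Fin p,
        (((D mi.1).mulVec θols) mi.2 + -(Sxy mi.1 mi.2 - Sxybar mi.2)) ^ 2
        = ∑ m, ∑ i, (((D m).mulVec θols) i - (Sxy m i - Sxybar i)) ^ 2 := by
      rw [Fintype.sum_prod_type]
      exact Finset.sum_congr rfl fun m _ => Finset.sum_congr rfl fun i _ => by ring
    have eB : ∑ mi : Fin M × Fin p, (((D mi.1).mulVec θols) mi.2) ^ 2
        = ∑ m, ∑ i, (((D m).mulVec θols) i) ^ 2 := by
      rw [Fintype.sum_prod_type]
    have eC : ∑ mi : Fin M × Fin p, (-(Sxy mi.1 mi.2 - Sxybar mi.2)) ^ 2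
        = ∑ m, ∑ i, (Sxy m i - Sxybar i) ^ 2 := by
      rw [Fintype.sum_prod_type]
      exact Finset.sum_congr rfl fun m _ => Finset.sum_congr rfl fun i _ => by ring
    rw [eA, eB, eC] at h
    exact h
  have hsqU : Real.sqrt (∑ m, ∑ i, (((D m).mulVec θols) i) ^ 2)
      ≤ Real.sqrt (∑ m, Matrix.trace (D m * D m)) * Real.sqrt B := by
    rw [← Real.sqrt_mul htrnn]
    exact Real.sqrt_le_sqrt hU
  -- rewrite ∑ r²
  have hsum_r : ∑ mi : Fin M × Fin p, (r mi) ^ 2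
      = α ^ 2 * ∑ m, ∑ i, (((D m).mulVec θols) i - (Sxy m i - Sxybar i)) ^ 2 := by
    rw [Fintype.sum_prod_type, Finset.mul_sum]
    refine Finset.sum_congr rfl fun m _ => ?_
    rw [Finset.mul_sum]
    refine Finset.sum_congr rfl fun i _ => ?_
    rw [hrval m i]; ring
  -- assemble
  have hMinn : (0:ℝ) ≤ (M:ℝ)⁻¹ := by positivity
  rw [hsum_r, Real.sqrt_mul hMinn, Real.sqrt_mul (by positivity), Real.sqrt_sq hα.le,
    Real.sqrt_mul hMinn, Real.sqrt_mul hMinn]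
  have key : Real.sqrt (∑ m, ∑ i, (((D m).mulVec θols) i - (Sxy m i - Sxybar i)) ^ 2)
      ≤ Real.sqrt (∑ m, Matrix.trace (D m * D m)) * Real.sqrt B
        + Real.sqrt (∑ m, ∑ i, (Sxy m i - Sxybar i) ^ 2) :=
    hmink.trans (add_le_add_left hsqU _)
  calc Real.sqrt ((M:ℝ)⁻¹) * (α * Real.sqrt (∑ m, ∑ i,
        (((D m).mulVec θols) i - (Sxy m i - Sxybar i)) ^ 2))
      ≤ Real.sqrt ((M:ℝ)⁻¹) * (α * (Real.sqrt (∑ m, Matrix.trace (D m * D m)) * Real.sqrt B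
          + Real.sqrt (∑ m, ∑ i, (Sxy m i - Sxybar i) ^ 2))) := by
        refine mul_le_mul_of_nonneg_left (mul_le_mul_of_nonneg_left key hα.le)
          (Real.sqrt_nonneg _)
    _ = α * (Real.sqrt ((M:ℝ)⁻¹) * Real.sqrt (∑ m, Matrix.trace (D m * D m)) * Real.sqrt B
          + Real.sqrt ((M:ℝ)⁻¹) * Real.sqrt (∑ m, ∑ i, (Sxy m i - Sxybar i) ^ 2)) := by
        ring
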